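/- Let G be a finite group, M = ⊕_{χ∈Irr(G)} M_χ the direct sum of one copy of each irreducible complex G-module, with M_1 the trivial module. Let R ⊆ M be a subspace containing M_1 such that π(R ⊗ R) ⊆ R for every G-module homomorphism π : M ⊗ M → M. Then there exists a subgroup H of G such that R = M^H, the subspace of H-fixed vectors of M. -/

import Mathlib

open TensorProduct


set_option linter.unusedSectionVars false
set_option maxHeartbeats 1000000


section AuxDefs

variable {G : Type*} [Group G] [Fintype G]

/-- Conjugate a representation along a linear equivalence. -/
noncomputable def conjRep {k : Type*} [CommSemiring k] {U U' : Type*} [AddCommMonoid U]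
    [Module k U] [AddCommMonoid U'] [Module k U'] {H : Type*} [Monoid H]
    (σ : Representation k H U) (e : U ≃ₗ[k] U') : Representation k H U' where
  toFun g := e.conj (σ g)
  map_one' := by ext v; simp [LinearEquiv.conj_apply]
  map_mul' g h := by
    ext v
    simp [LinearEquiv.conj_apply, Module.End.mul_apply]

lemma conjRep_apply {k : Type*} [CommSemiring k] {U U' : Type*} [AddCommMonoid U]
    [Module k U] [AddCommMonoid U'] [Module k U'] {H : Type*} [Monoid H]
    (σ : Representation k H U) (e : U ≃ₗ[k] U') (g : H) (v : U') :
    conjRep σ e g v = e (σ g (e.symm v)) := by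
  simp [conjRep, LinearEquiv.conj_apply]

lemma conjRep_simple {k : Type*} [CommSemiring k] {U U' : Type*} [AddCommMonoid U]
    [Module k U] [AddCommMonoid U'] [Module k U'] {H : Type*} [Monoid H]
    (σ : Representation k H U) (e : U ≃ₗ[k] U')
    (hs : ∀ p : Submodule k U, (∀ g, ∀ v ∈ p, σ g v ∈ p) → p = ⊥ ∨ p = ⊤) :
    ∀ p : Submodule k U', (∀ g, ∀ v ∈ p, conjRep σ e g v ∈ p) → p = ⊥ ∨ p = ⊤ := by
  intro p hp
  have hinv : ∀ g, ∀ v ∈ p.map e.symm.toLinearMap, σ g v ∈ p.map e.symm.toLinearMap := by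
    rintro g v ⟨w, hw, rfl⟩
    refine ⟨conjRep σ e g w, hp g w hw, ?_⟩
    rw [conjRep_apply]
    simp
  rcases hs _ hinv with h | h
  · left
    rw [Submodule.eq_bot_iff] at h ⊢
    intro x hx
    have : e.symm x ∈ p.map e.symm.toLinearMap := ⟨x, hx, rfl⟩
    have := h _ this
    have := congrArg e this
    simpa using this
  · right
    rw [Submodule.eq_top_iff'] at h ⊢
    intro x
    rcases h (e.symm x) with ⟨y, hy, hyx⟩
    have : y = x := by
      have := congrArg e hyx
      simpa using this
    exact this ▸ hy

lemma schur_endo {V : Type*} [AddCommGroup V] [Module ℂ V] [FiniteDimensional ℂ V] [Nontrivial V]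
    {σ : Representation ℂ G V}
    (hs : ∀ p : Submodule ℂ V, (∀ g, ∀ v ∈ p, σ g v ∈ p) → p = ⊥ ∨ p = ⊤)
    (f : V →ₗ[ℂ] V) (hf : ∀ g v, f (σ g v) = σ g (f v)) :
    ∃ c : ℂ, f = c • LinearMap.id := by
  obtain ⟨c, hc⟩ := Module.End.exists_eigenvalue f
  refine ⟨c, ?_⟩
  have hker : ∀ g, ∀ v ∈ Module.End.eigenspace f c, σ g v ∈ Module.End.eigenspace f c := by
    intro g v hv
    rw [Module.End.mem_eigenspace_iff] at hv ⊢
    rw [hf, hv, map_smul]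
  rcases hs _ hker with h | h
  · exact absurd h hc
  · ext v
    have hv : v ∈ Module.End.eigenspace f c := h ▸ Submodule.mem_top
    rw [Module.End.mem_eigenspace_iff] at hv
    simpa using hv

lemma schur_zero {V W : Type*} [AddCommGroup V] [Module ℂ V] [AddCommGroup W] [Module ℂ W]
    {σ : Representation ℂ G V} {τ : Representation ℂ G W}
    (hsV : ∀ p : Submodule ℂ V, (∀ g, ∀ v ∈ p, σ g v ∈ p) → p = ⊥ ∨ p = ⊤)
    (hsW : ∀ p : Submodule ℂ W, (∀ g, ∀ v ∈ p, τ g v ∈ p) → p = ⊥ ∨ p = ⊤)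
    (hni : ¬ ∃ e : V ≃ₗ[ℂ] W, ∀ g v, e (σ g v) = τ g (e v))
    (f : V →ₗ[ℂ] W) (hf : ∀ g v, f (σ g v) = τ g (f v)) : f = 0 := by
  by_contra hne
  have hker : LinearMap.ker f = ⊥ := by
    rcases hsV (LinearMap.ker f) (fun g v hv => by
      rw [LinearMap.mem_ker] at hv ⊢
      rw [hf, hv, map_zero]) with h | h
    · exact h
    · exact absurd (LinearMap.ker_eq_top.mp h) hne
  have hrange : LinearMap.range f = ⊤ := by
    rcases hsW (LinearMap.range f) (by
      rintro g w ⟨v, rfl⟩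
      exact ⟨σ g v, hf g v⟩) with h | h
    · exact absurd (LinearMap.range_eq_bot.mp h) hne
    · exact h
  exact hni ⟨LinearEquiv.ofBijective f ⟨LinearMap.ker_eq_bot.mp hker,
    LinearMap.range_eq_top.mp hrange⟩, fun g v => hf g v⟩

lemma exists_equivariant_proj {U : Type*} [AddCommGroup U] [Module ℂ U]
    (σ : Representation ℂ G U) (p : Submodule ℂ U) (hp : ∀ g, ∀ v ∈ p, σ g v ∈ p) :
    ∃ f : U →ₗ[ℂ] U, (∀ g v, f (σ g v) = σ g (f v)) ∧ (∀ v, f v ∈ p) ∧ (∀ v ∈ p, f v = v) := by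
  obtain ⟨q, hq⟩ := p.exists_isCompl
  set π₀ : U →ₗ[ℂ] U := p.subtype ∘ₗ (p.projectionOnto q hq) with hπ₀
  have hπ₀p : ∀ v, π₀ v ∈ p := fun v => (p.projectionOnto q hq v).2
  have hπ₀id : ∀ v ∈ p, π₀ v = v := by
    intro v hv
    simp only [hπ₀, LinearMap.coe_comp, Function.comp_apply]
    rw [show v = ((⟨v, hv⟩ : p) : U) from rfl, Submodule.projectionOnto_apply_left hq]
    rfl
  have hcard : (Fintype.card G : ℂ) ≠ 0 := by
    exact_mod_cast Nat.cast_ne_zero.mpr Fintype.card_ne_zero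
  have hco : ∀ (a b : G) (w : U), σ a (σ b w) = σ (a * b) w := fun a b w => by
    rw [map_mul]; rfl
  refine ⟨(Fintype.card G : ℂ)⁻¹ • ∑ g : G, (σ g) ∘ₗ π₀ ∘ₗ (σ g⁻¹), ?_, ?_, ?_⟩
  · intro h v
    simp only [LinearMap.smul_apply, LinearMap.coe_sum, Finset.sum_apply,
      LinearMap.coe_comp, Function.comp_apply]
    rw [map_smul, map_sum]
    congr 1
    refine Fintype.sum_equiv (Equiv.mulLeft h⁻¹) _ _ (fun g => ?_)
    simp only [Equiv.coe_mulLeft]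
    simp only [hco]
    rw [show h * (h⁻¹ * g) = g by group, show (h⁻¹ * g)⁻¹ = g⁻¹ * h by group]
  · intro v
    simp only [LinearMap.smul_apply, LinearMap.coe_sum, Finset.sum_apply,
      LinearMap.coe_comp, Function.comp_apply]
    refine Submodule.smul_mem _ _ (Submodule.sum_mem _ fun g _ => hp g _ (hπ₀p _))
  · intro v hv
    simp only [LinearMap.smul_apply, LinearMap.coe_sum, Finset.sum_apply,
      LinearMap.coe_comp, Function.comp_apply]
    have hgv : ∀ g : G, σ g (π₀ (σ g⁻¹ v)) = v := by
      intro g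
      rw [hπ₀id _ (hp g⁻¹ v hv)]
      simp [hco]
    rw [Finset.sum_congr rfl (fun g _ => hgv g), Finset.sum_const, Finset.card_univ]
    rw [← Nat.cast_smul_eq_nsmul ℂ, smul_smul, inv_mul_cancel₀ hcard, one_smul]

end AuxDefs


/-- A unital subalgebra (given as a submodule closed under `*` and containing `1`) of
functions on a finite set contains every function constant on its separation classes. -/
lemma mem_of_respects {X : Type*} [Fintype X] (S : Submodule ℂ (X → ℂ))
    (h1 : (1 : X → ℂ) ∈ S) (hmul : ∀ f ∈ S, ∀ f' ∈ S, f * f' ∈ S)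
    (F : X → ℂ) (hF : ∀ a b : X, (∀ f ∈ S, f a = f b) → F a = F b) : F ∈ S := by
  classical
  set r : X → X → Prop := fun a b => ∀ f ∈ S, f a = f b with hr
  have hrrefl : ∀ a, r a a := fun a f _ => rfl
  have hrsymm : ∀ a b, r a b → r b a := fun a b h f hf => (h f hf).symm
  have hrtrans : ∀ a b c, r a b → r b c → r a c := fun a b c h h' f hf =>
    (h f hf).trans (h' f hf)
  have hsep : ∀ a b : X, ¬ r a b → ∃ h ∈ S, h a = 1 ∧ h b = 0 := by
    intro a b hab
    have hex : ∃ f ∈ S, f a ≠ f b := by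
      by_contra hc
      push_neg at hc
      exact hab (fun f hf => hc f hf)
    obtain ⟨f, hfS, hfab⟩ := hex
    have hne : f a - f b ≠ 0 := sub_ne_zero.mpr hfab
    refine ⟨(f a - f b)⁻¹ • (f - (f b) • 1), ?_, ?_, ?_⟩
    · exact S.smul_mem _ (S.sub_mem hfS (S.smul_mem _ h1))
    · simp only [Pi.smul_apply, Pi.sub_apply, Pi.one_apply, smul_eq_mul, mul_one]
      field_simp
    · simp only [Pi.smul_apply, Pi.sub_apply, Pi.one_apply, smul_eq_mul, mul_one]
      simp [sub_self]
  -- for each pair (a, b), a function in S which is 1 at a and 0 at b when ¬ r a b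
  have hsep' : ∀ a b : X, ∃ h ∈ S, (¬ r a b → (h a = 1 ∧ h b = 0)) ∧ (r a b → h = 1) := by
    intro a b
    by_cases hab : r a b
    · exact ⟨1, h1, fun h => absurd hab h, fun _ => rfl⟩
    · obtain ⟨h, hS, h1', h0'⟩ := hsep a b hab
      exact ⟨h, hS, fun _ => ⟨h1', h0'⟩, fun h' => absurd h' hab⟩
  choose hfn hfnS hfn0 hfn1 using hsep'
  set e : X → (X → ℂ) := fun a => ∏ b : X, hfn a b with he
  have heS : ∀ a, e a ∈ S := by
    intro a
    rw [he]
    refine Finset.prod_induction _ (· ∈ S) (fun f f' hf hf' => hmul f hf f' hf') h1 ?_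
    exact fun b _ => hfnS a b
  have hrespect : ∀ f ∈ S, ∀ x y, r x y → f x = f y := fun f hf x y hxy => hxy f hf
  have hea : ∀ a x, r a x → e a x = 1 := by
    intro a x hax
    rw [he]
    simp only [Finset.prod_apply]
    refine Finset.prod_eq_one (fun b _ => ?_)
    have : hfn a b x = hfn a b a := hrespect _ (hfnS a b) x a (hrsymm a x hax)
    rw [this]
    by_cases hab : r a b
    · rw [hfn1 a b hab]; rfl
    · exact (hfn0 a b hab).1
  have heb : ∀ a x, ¬ r a x → e a x = 0 := by
    intro a x hax
    rw [he]
    simp only [Finset.prod_apply]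
    exact Finset.prod_eq_zero (Finset.mem_univ x) (hfn0 a x hax).2
  set N : X → ℕ := fun a => (Finset.univ.filter (fun b => r a b)).card with hN
  have hNx : ∀ x, (N x : ℂ) ≠ 0 := by
    intro x
    simp only [hN, Nat.cast_ne_zero, ← Nat.pos_iff_ne_zero, Finset.card_pos]
    exact ⟨x, Finset.mem_filter.mpr ⟨Finset.mem_univ x, hrrefl x⟩⟩
  have hFeq : F = ∑ a : X, (F a / (N a : ℂ)) • e a := by
    funext x
    simp only [Finset.sum_apply, Pi.smul_apply, smul_eq_mul]
    have hterm : ∀ a : X, (F a / (N a : ℂ)) * e a x =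
        if r a x then F x / (N x : ℂ) else 0 := by
      intro a
      by_cases hax : r a x
      · rw [if_pos hax, hea a x hax, mul_one]
        have hFx : F a = F x := hF a x hax
        have hNax : N a = N x := by
          simp only [hN]
          congr 1
          apply Finset.filter_congr
          intro b _
          constructor
          · exact fun h => hrtrans x a b (hrsymm a x hax) h
          · exact fun h => hrtrans a x b hax h
        rw [hFx, hNax]
      · rw [if_neg hax, heb a x hax, mul_zero]
    rw [Finset.sum_congr rfl (fun a _ => hterm a)]
    rw [← Finset.sum_filter, Finset.sum_const]
    have hcardeq : (Finset.univ.filter (fun a => r a x)).card = N x := by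
      simp only [hN]
      congr 1
      apply Finset.filter_congr
      intro b _
      exact ⟨hrsymm b x, hrsymm x b⟩
    rw [hcardeq, nsmul_eq_mul, mul_comm, div_mul_cancel₀ _ (hNx x)]
  rw [hFeq]
  exact Submodule.sum_mem _ (fun a _ => S.smul_mem _ (heS a))


section Avg

variable {G : Type*} [Group G] [Fintype G]

variable {Vi Vj : Type*} [AddCommGroup Vi] [Module ℂ Vi] [AddCommGroup Vj] [Module ℂ Vj]

/-- `f ↦ ∑_g f g • ρi g⁻¹ y`. -/
noncomputable def Lmap (ρi : Representation ℂ G Vi) (y : Vi) : (G → ℂ) →ₗ[ℂ] Vi where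
  toFun f := ∑ g : G, f g • ρi g⁻¹ y
  map_add' f f' := by
    simp only [Pi.add_apply, add_smul]
    rw [Finset.sum_add_distrib]
  map_smul' c f := by
    simp only [Pi.smul_apply, smul_eq_mul, RingHom.id_apply]
    rw [Finset.smul_sum]
    simp [smul_smul]

/-- The averaged rank-one intertwiner `x ↦ ∑_g ψ (ρj g x) • ρi g⁻¹ y`. -/
noncomputable def avgMap (ρj : Representation ℂ G Vj) (ρi : Representation ℂ G Vi)
    (ψ : Vj →ₗ[ℂ] ℂ) (y : Vi) : Vj →ₗ[ℂ] Vi where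
  toFun x := ∑ g : G, ψ (ρj g x) • ρi g⁻¹ y
  map_add' x x' := by
    simp only [map_add, add_smul]
    rw [Finset.sum_add_distrib]
  map_smul' c x := by
    simp only [map_smul, smul_eq_mul, RingHom.id_apply]
    rw [Finset.smul_sum]
    simp [smul_smul]

lemma Lmap_coeff (ρj : Representation ℂ G Vj) (ρi : Representation ℂ G Vi)
    (ψ : Vj →ₗ[ℂ] ℂ) (y : Vi) (x : Vj) :
    Lmap ρi y (fun g => ψ (ρj g x)) = avgMap ρj ρi ψ y x := rfl

lemma avgMap_equivariant (ρj : Representation ℂ G Vj) (ρi : Representation ℂ G Vi)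
    (ψ : Vj →ₗ[ℂ] ℂ) (y : Vi) (h : G) (x : Vj) :
    avgMap ρj ρi ψ y (ρj h x) = ρi h (avgMap ρj ρi ψ y x) := by
  have hcoj : ∀ (a b : G) (w : Vj), ρj a (ρj b w) = ρj (a * b) w := fun a b w => by
    rw [map_mul]; rfl
  have hcoi : ∀ (a b : G) (w : Vi), ρi a (ρi b w) = ρi (a * b) w := fun a b w => by
    rw [map_mul]; rfl
  simp only [avgMap, LinearMap.coe_mk, AddHom.coe_mk]
  rw [map_sum]
  refine Fintype.sum_equiv (Equiv.mulRight h) _ _ (fun g => ?_)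
  simp only [Equiv.coe_mulRight, hcoj, map_smul, hcoi]
  rw [show h * (g * h)⁻¹ = g⁻¹ by group]
end Avg

section AvgTrace

variable {G : Type*} [Group G] [Fintype G]
variable {Vi : Type*} [AddCommGroup Vi] [Module ℂ Vi] [FiniteDimensional ℂ Vi]

lemma avgMap_trace (ρi : Representation ℂ G Vi) (ψ : Vi →ₗ[ℂ] ℂ) (y : Vi) :
    LinearMap.trace ℂ Vi (avgMap ρi ρi ψ y) = (Fintype.card G : ℂ) * ψ y := by
  have hrw : avgMap ρi ρi ψ y =
      ∑ g : G, (ρi g⁻¹) ∘ₗ ((LinearMap.toSpanSingleton ℂ Vi y) ∘ₗ ψ) ∘ₗ (ρi g) := by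
    ext x
    simp [avgMap, LinearMap.toSpanSingleton_apply]
  rw [hrw, map_sum]
  have htr : ∀ g : G, LinearMap.trace ℂ Vi
      ((ρi g⁻¹) ∘ₗ ((LinearMap.toSpanSingleton ℂ Vi y) ∘ₗ ψ) ∘ₗ (ρi g)) = ψ y := by
    intro g
    have hco : ∀ (a b : G) (w : Vi), ρi a (ρi b w) = ρi (a * b) w := fun a b w => by
      rw [map_mul]; rfl
    set e : Vi ≃ₗ[ℂ] Vi := LinearEquiv.ofLinear (ρi g⁻¹) (ρi g)
      (by ext w; simp [hco]) (by ext w; simp [hco]) with he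
    have hconj : (ρi g⁻¹) ∘ₗ ((LinearMap.toSpanSingleton ℂ Vi y) ∘ₗ ψ) ∘ₗ (ρi g) =
        e.conj ((LinearMap.toSpanSingleton ℂ Vi y) ∘ₗ ψ) := by
      rw [LinearEquiv.conj_apply]
      rfl
    rw [hconj, LinearMap.trace_conj']
    rw [LinearMap.trace_comp_comm']
    have : ψ ∘ₗ (LinearMap.toSpanSingleton ℂ Vi y) = (ψ y) • LinearMap.id := by
      ext
      simp [LinearMap.toSpanSingleton_apply]
    rw [this, map_smul, LinearMap.trace_id]
    simp
  rw [Finset.sum_congr rfl (fun g _ => htr g), Finset.sum_const, Finset.card_univ,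
    nsmul_eq_mul]
end AvgTrace

set_option maxHeartbeats 800000

universe u₁

section Decomp

variable {G : Type*} [Group G] [Fintype G]

/-- Restriction of a representation to an invariant submodule. -/
noncomputable def subRep {U : Type*} [AddCommGroup U] [Module ℂ U]
    (σ : Representation ℂ G U) (p : Submodule ℂ U) (hp : ∀ g, ∀ v ∈ p, σ g v ∈ p) :
    Representation ℂ G p where
  toFun g := (σ g).restrict (hp g)
  map_one' := by
    ext v
    simp [LinearMap.restrict_apply]
  map_mul' g h := by
    ext v
    simp [LinearMap.restrict_apply, Module.End.mul_apply]

lemma subRep_apply {U : Type*} [AddCommGroup U] [Module ℂ U]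
    (σ : Representation ℂ G U) (p : Submodule ℂ U) (hp : ∀ g, ∀ v ∈ p, σ g v ∈ p)
    (g : G) (v : p) : (subRep σ p hp g v : U) = σ g (v : U) := rfl

lemma exists_decomp {ι : Type*} (V : ι → Type u₁)
    [∀ i, AddCommGroup (V i)] [∀ i, Module ℂ (V i)]
    (ρ : ∀ i, Representation ℂ G (V i))
    (hallN : ∀ (n : ℕ), 0 < n → ∀ (σ : Representation ℂ G (Fin n → ℂ)),
      (∀ p : Submodule ℂ (Fin n → ℂ), (∀ g, ∀ v ∈ p, σ g v ∈ p) → p = ⊥ ∨ p = ⊤) →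
      ∃ i, ∃ f : (Fin n → ℂ) ≃ₗ[ℂ] V i, ∀ g v, f (σ g v) = ρ i g (f v)) :
    ∀ (n : ℕ) (U : Type u₁) [AddCommGroup U] [Module ℂ U]
      [FiniteDimensional ℂ U] (σ : Representation ℂ G U),
      Module.finrank ℂ U = n →
      ∃ (T : Type) (fT : Fintype T) (k : T → ι) (P : ∀ t, U →ₗ[ℂ] V (k t))
        (s : ∀ t, V (k t) →ₗ[ℂ] U),
        (∀ t g v, P t (σ g v) = ρ (k t) g (P t v)) ∧
        (∀ t g w, s t (ρ (k t) g w) = σ g (s t w)) ∧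
        (∀ v : U, (@Finset.univ T fT).sum (fun t => s t (P t v)) = v) := by
  intro n
  induction n using Nat.strong_induction_on with
  | _ n IH =>
    intro U instAG instMod instFD σ hn
    by_cases h0 : n = 0
    · subst h0
      haveI hss : Subsingleton U := Module.finrank_zero_iff.mp hn
      refine ⟨Empty, inferInstance, fun t => t.elim, fun t => t.elim, fun t => t.elim,
        fun t => t.elim, fun t => t.elim, fun v => ?_⟩
      simp only [Finset.univ_eq_empty, Finset.sum_empty]
      exact Subsingleton.elim _ _
    · by_cases hsimp : ∀ p : Submodule ℂ U, (∀ g, ∀ v ∈ p, σ g v ∈ p) → p = ⊥ ∨ p = ⊤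
      · -- simple case
        have hpos : 0 < Module.finrank ℂ U := by omega
        set e : U ≃ₗ[ℂ] (Fin (Module.finrank ℂ U) → ℂ) := (Module.finBasis ℂ U).equivFun
          with he
        obtain ⟨i, f, hf⟩ := hallN _ hpos (conjRep σ e) (conjRep_simple σ e hsimp)
        set E : U ≃ₗ[ℂ] V i := e.trans f with hE'
        have hE : ∀ g v, E (σ g v) = ρ i g (E v) := by
          intro g v
          have h1 : conjRep σ e g (e v) = e (σ g v) := by
            rw [conjRep_apply]
            simp
          calc E (σ g v) = f (e (σ g v)) := rfl
            _ = f (conjRep σ e g (e v)) := by rw [h1]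
            _ = ρ i g (f (e v)) := hf g (e v)
            _ = ρ i g (E v) := rfl
        refine ⟨PUnit, inferInstance, fun _ => i, fun _ => E.toLinearMap,
          fun _ => E.symm.toLinearMap, fun t g v => hE g v, ?_, ?_⟩
        · intro t g w
          have h2 := hE g (E.symm w)
          simp only [LinearEquiv.apply_symm_apply] at h2
          apply E.injective
          simpa using h2.symm
        · intro v
          simp
      · -- non-simple case
        push_neg at hsimp
        obtain ⟨p, hpinv, hpbot, hptop⟩ := hsimp
        obtain ⟨f, hfequiv, hfp, hfid⟩ := exists_equivariant_proj σ p hpinv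
        set q := LinearMap.ker f with hq
        have hqinv : ∀ g, ∀ v ∈ q, σ g v ∈ q := by
          intro g v hv
          rw [hq, LinearMap.mem_ker] at hv ⊢
          rw [hfequiv, hv, map_zero]
        have hplt : Module.finrank ℂ p < n :=
          hn ▸ Submodule.finrank_lt hptop
        have hqlt : Module.finrank ℂ q < n := by
          refine hn ▸ Submodule.finrank_lt ?_
          intro hqt
          obtain ⟨v, hvp, hvne⟩ := (Submodule.ne_bot_iff p).mp hpbot
          have hf0 : f = 0 := LinearMap.ker_eq_top.mp hqt
          exact hvne (by rw [← hfid v hvp, hf0]; rfl)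
        obtain ⟨T₁, fT₁, k₁, P₁, s₁, hP₁, hs₁, hid₁⟩ :=
          IH _ hplt p (subRep σ p hpinv) rfl
        obtain ⟨T₂, fT₂, k₂, P₂, s₂, hP₂, hs₂, hid₂⟩ :=
          IH _ hqlt q (subRep σ q hqinv) rfl
        letI := fT₁
        letI := fT₂
        set πp : U →ₗ[ℂ] p := LinearMap.codRestrict p f hfp with hπp'
        have hπqmem : ∀ x, ((LinearMap.id : U →ₗ[ℂ] U) - f) x ∈ q := by
          intro x
          rw [hq, LinearMap.mem_ker]
          simp only [LinearMap.sub_apply, LinearMap.id_apply, map_sub]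
          rw [hfid (f x) (hfp x), sub_self]
        set πq : U →ₗ[ℂ] q := LinearMap.codRestrict q ((LinearMap.id : U →ₗ[ℂ] U) - f) hπqmem with hπq'
        have hπpe : ∀ g v, πp (σ g v) = subRep σ p hpinv g (πp v) := by
          intro g v
          apply Subtype.ext
          simp only [hπp', LinearMap.codRestrict_apply, subRep_apply]
          exact hfequiv g v
        have hπqe : ∀ g v, πq (σ g v) = subRep σ q hqinv g (πq v) := by
          intro g v
          apply Subtype.ext
          simp only [hπq', LinearMap.codRestrict_apply, subRep_apply,
            LinearMap.sub_apply, LinearMap.id_apply]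
          rw [map_sub, hfequiv]
        refine ⟨T₁ ⊕ T₂, inferInstance, Sum.elim k₁ k₂,
          (fun t => match t with
            | .inl a => (P₁ a) ∘ₗ πp
            | .inr b => (P₂ b) ∘ₗ πq),
          (fun t => match t with
            | .inl a => p.subtype ∘ₗ s₁ a
            | .inr b => q.subtype ∘ₗ s₂ b), ?_, ?_, ?_⟩
        · rintro (a | b) g v
          · show P₁ a (πp (σ g v)) = ρ (k₁ a) g (P₁ a (πp v))
            rw [hπpe]
            exact hP₁ a g (πp v)
          · show P₂ b (πq (σ g v)) = ρ (k₂ b) g (P₂ b (πq v))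
            rw [hπqe]
            exact hP₂ b g (πq v)
        · rintro (a | b) g w
          · simp only [LinearMap.coe_comp, Function.comp_apply]
            exact (congrArg p.subtype (hs₁ a g w)).trans rfl
          · simp only [LinearMap.coe_comp, Function.comp_apply]
            exact (congrArg q.subtype (hs₂ b g w)).trans rfl
        · intro v
          rw [Fintype.sum_sum_type]
          simp only [LinearMap.coe_comp, Function.comp_apply]
          show (∑ x : T₁, p.subtype (s₁ x (P₁ x (πp v)))) +
            (∑ x : T₂, q.subtype (s₂ x (P₂ x (πq v)))) = v
          have h₁ : ∑ a : T₁, p.subtype (s₁ a (P₁ a (πp v))) = (πp v : U) := by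
            refine (map_sum p.subtype (fun a => s₁ a (P₁ a (πp v))) Finset.univ).symm.trans ?_
            exact congrArg p.subtype (hid₁ (πp v))
          have h₂ : ∑ b : T₂, q.subtype (s₂ b (P₂ b (πq v))) = (πq v : U) := by
            refine (map_sum q.subtype (fun b => s₂ b (P₂ b (πq v))) Finset.univ).symm.trans ?_
            exact congrArg q.subtype (hid₂ (πq v))
          rw [h₁, h₂]
          simp only [hπp', hπq', LinearMap.codRestrict_apply, LinearMap.sub_apply,
            LinearMap.id_apply]
          abel

end Decomp


/-- The direct sum (product) of a finite family of representations. -/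
noncomputable def piRep {k G ι : Type*} [CommSemiring k] [Monoid G] (V : ι → Type*)
    [∀ i, AddCommMonoid (V i)] [∀ i, Module k (V i)]
    (ρ : ∀ i, Representation k G (V i)) : Representation k G (∀ i, V i) where
  toFun g := LinearMap.pi fun i => (ρ i g).comp (LinearMap.proj i)
  map_one' := by ext v i; simp
  map_mul' g h := by ext v i; simp

/-- let `M = ⊕_χ M_χ` be the multiplicity-free direct sum of all the
irreducible complex `G`-modules, with `M_{i₀}` the trivial one, and let `R ⊆ M` be a
subspace containing the trivial summand such that `π(R ⊗ R) ⊆ R` for every `G`-module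
homomorphism `π : M ⊗ M → M`.  Then `R = M^H` for some subgroup `H ≤ G`. -/
theorem invariant_subspace_eq_fixedPoints
    (G : Type*) [Group G] [Fintype G]
    (ι : Type*) [Fintype ι] [DecidableEq ι] (V : ι → Type*)
    [∀ i, AddCommGroup (V i)] [∀ i, Module ℂ (V i)]
    [∀ i, FiniteDimensional ℂ (V i)] [∀ i, Nontrivial (V i)]
    (ρ : ∀ i, Representation ℂ G (V i))
    (hSimple : ∀ i, ∀ p : Submodule ℂ (V i),
      (∀ g : G, ∀ v ∈ p, ρ i g v ∈ p) → p = ⊥ ∨ p = ⊤)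
    (hNonIso : ∀ i j, i ≠ j →
      ¬ ∃ f : V i ≃ₗ[ℂ] V j, ∀ (g : G) (v : V i), f (ρ i g v) = ρ j g (f v))
    (hAll : ∀ (U : Type*) [AddCommGroup U] [Module ℂ U] [FiniteDimensional ℂ U]
      [Nontrivial U] (σ : Representation ℂ G U),
      (∀ p : Submodule ℂ U, (∀ g : G, ∀ v ∈ p, σ g v ∈ p) → p = ⊥ ∨ p = ⊤) →
      ∃ i, ∃ f : U ≃ₗ[ℂ] V i, ∀ (g : G) (v : U), f (σ g v) = ρ i g (f v))
    (i₀ : ι) (hTriv : ∀ (g : G) (v : V i₀), ρ i₀ g v = v)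
    (hDim : Module.finrank ℂ (V i₀) = 1)
    (R : Submodule ℂ (∀ i, V i))
    (hR1 : LinearMap.range (LinearMap.single ℂ V i₀) ≤ R)
    (hClosed : ∀ π : ((∀ i, V i) ⊗[ℂ] (∀ i, V i)) →ₗ[ℂ] (∀ i, V i),
      (∀ g : G, π ∘ₗ ((piRep V ρ).tprod (piRep V ρ) g) = (piRep V ρ g) ∘ₗ π) →
      ∀ x ∈ R, ∀ y ∈ R, π (x ⊗ₜ[ℂ] y) ∈ R) :
    ∃ H : Subgroup G,
      R = ⨅ h ∈ H, LinearMap.eqLocus (piRep V ρ h)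
        (LinearMap.id : (∀ i, V i) →ₗ[ℂ] ∀ i, V i) := by
  classical
  -- basic facts about `piRep`
  have hτ_apply : ∀ (g : G) (x : ∀ i, V i) (i : ι), piRep V ρ g x i = ρ i g (x i) :=
    fun g x i => rfl
  have hco : ∀ (i : ι) (a b : G) (w : V i), ρ i a (ρ i b w) = ρ i (a * b) w :=
    fun i a b w => by rw [map_mul]; rfl
  have hsingle : ∀ (j : ι) (g : G) (x : V j),
      piRep V ρ g (Pi.single j x) = Pi.single j (ρ j g x) := by
    intro j g x
    funext i
    rw [hτ_apply]
    by_cases h : i = j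
    · subst h
      rw [Pi.single_eq_same, Pi.single_eq_same]
    · rw [Pi.single_eq_of_ne h, Pi.single_eq_of_ne h, map_zero]
  -- the component subspaces
  set Rc : ∀ i, Submodule ℂ (V i) := fun i => R.comap (LinearMap.single ℂ V i) with hRc
  have hRcmem : ∀ (i : ι) (v : V i), v ∈ Rc i ↔ Pi.single i v ∈ R := by
    intro i v
    rw [hRc]
    simp only [Submodule.mem_comap]
    rw [show (LinearMap.single ℂ V i) v = Pi.single i v from rfl]
  -- a functional on the trivial component
  obtain ⟨v₀, hv₀⟩ := exists_ne (0 : V i₀)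
  have hφ₀ : ∃ φ₀ : V i₀ →ₗ[ℂ] ℂ, φ₀ v₀ = 1 := by
    have h := (Module.forall_dual_apply_eq_zero_iff ℂ v₀).not.mpr hv₀
    push_neg at h
    obtain ⟨φ, hφ⟩ := h
    exact ⟨(φ v₀)⁻¹ • φ, by simp [inv_mul_cancel₀ hφ]⟩
  obtain ⟨φ₀, hφ₀v₀⟩ := hφ₀
  have hu₀R : Pi.single i₀ v₀ ∈ R := hR1 ⟨v₀, rfl⟩
  have hRc0 : ∀ v : V i₀, v ∈ Rc i₀ := fun v => (hRcmem i₀ v).mpr (hR1 ⟨v, rfl⟩)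
  -- components of elements of R are in R
  have hcomp : ∀ x ∈ R, ∀ i, x i ∈ Rc i := by
    intro x hx i
    set B : (∀ i, V i) →ₗ[ℂ] (∀ i, V i) →ₗ[ℂ] (∀ i, V i) :=
      LinearMap.mk₂ ℂ (fun x y => φ₀ (y i₀) • Pi.single i (x i))
        (fun x x' y => by
          rw [show (x + x') i = x i + x' i from rfl, Pi.single_add, smul_add])
        (fun c x y => by
          rw [show (c • x) i = c • x i from rfl, Pi.single_smul, smul_comm])
        (fun x y y' => by
          rw [show (y + y') i₀ = y i₀ + y' i₀ from rfl, map_add, add_smul])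
        (fun c x y => by
          rw [show (c • y) i₀ = c • y i₀ from rfl, map_smul, smul_eq_mul, mul_smul])
      with hB
    set π : ((∀ i, V i) ⊗[ℂ] (∀ i, V i)) →ₗ[ℂ] (∀ i, V i) := TensorProduct.lift B with hπ
    have hπtm : ∀ x y : ∀ i, V i, π (x ⊗ₜ[ℂ] y) = φ₀ (y i₀) • Pi.single i (x i) :=
      fun x y => rfl
    have hπequi : ∀ g : G, π ∘ₗ ((piRep V ρ).tprod (piRep V ρ) g) = (piRep V ρ g) ∘ₗ π := by
      intro g
      refine TensorProduct.ext' (fun x y => ?_)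
      simp only [LinearMap.comp_apply, Representation.tprod_apply, TensorProduct.map_tmul]
      rw [hπtm, hπtm, hτ_apply, hτ_apply, hTriv, map_smul, hsingle]
    have := hClosed π hπequi x hx (Pi.single i₀ v₀) hu₀R
    rw [hπtm, Pi.single_eq_same, hφ₀v₀, one_smul] at this
    exact (hRcmem i (x i)).mpr this
  -- equivariant maps out of tensor products preserve the `Rc`
  have hquot : ∀ (a b c : ι) (q : V a ⊗[ℂ] V b →ₗ[ℂ] V c),
      (∀ (g : G) (x : V a) (y : V b), q (ρ a g x ⊗ₜ[ℂ] ρ b g y) = ρ c g (q (x ⊗ₜ[ℂ] y))) →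
      ∀ x ∈ Rc a, ∀ y ∈ Rc b, q (x ⊗ₜ[ℂ] y) ∈ Rc c := by
    intro a b c q hq x hx y hy
    set π : ((∀ i, V i) ⊗[ℂ] (∀ i, V i)) →ₗ[ℂ] (∀ i, V i) :=
      (LinearMap.single ℂ V c) ∘ₗ q ∘ₗ
        (TensorProduct.map (LinearMap.proj a) (LinearMap.proj b)) with hπ
    have hπtm : ∀ x y : ∀ i, V i,
        π (x ⊗ₜ[ℂ] y) = Pi.single c (q (x a ⊗ₜ[ℂ] y b)) := fun x y => rfl
    have hπequi : ∀ g : G, π ∘ₗ ((piRep V ρ).tprod (piRep V ρ) g) = (piRep V ρ g) ∘ₗ π := by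
      intro g
      refine TensorProduct.ext' (fun x y => ?_)
      simp only [LinearMap.comp_apply, Representation.tprod_apply, TensorProduct.map_tmul]
      rw [hπtm, hπtm, hτ_apply, hτ_apply, hq, hsingle]
    have := hClosed π hπequi (Pi.single a x) ((hRcmem a x).mp hx)
      (Pi.single b y) ((hRcmem b y).mp hy)
    rw [hπtm, Pi.single_eq_same, Pi.single_eq_same] at this
    exact (hRcmem c _).mpr this
  -- irreducible representations on `Fin n → ℂ` are isomorphic to some `V i`
  have hallN : ∀ (n : ℕ), 0 < n → ∀ (σ : Representation ℂ G (Fin n → ℂ)),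
      (∀ p : Submodule ℂ (Fin n → ℂ), (∀ g, ∀ v ∈ p, σ g v ∈ p) → p = ⊥ ∨ p = ⊤) →
      ∃ i, ∃ f : (Fin n → ℂ) ≃ₗ[ℂ] V i, ∀ g v, f (σ g v) = ρ i g (f v) := by
    intro n hn σ hσ
    haveI : Nontrivial (Fin n → ℂ) := by
      refine ⟨fun _ => 0, fun _ => 1, fun h => ?_⟩
      have := congrFun h ⟨0, hn⟩
      simp at this
    set e : (Fin n → ℂ) ≃ₗ[ℂ] ULift (Fin n → ℂ) := ULift.moduleEquiv.symm with he
    haveI : FiniteDimensional ℂ (ULift (Fin n → ℂ)) := Module.Finite.equiv e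
    haveI : Nontrivial (ULift (Fin n → ℂ)) := e.symm.toEquiv.nontrivial
    obtain ⟨i, f, hf⟩ := hAll (ULift (Fin n → ℂ)) (conjRep σ e) (conjRep_simple σ e hσ)
    refine ⟨i, e.trans f, fun g v => ?_⟩
    have h1 : conjRep σ e g (e v) = e (σ g v) := by
      rw [conjRep_apply]
      simp
    calc (e.trans f) (σ g v) = f (e (σ g v)) := rfl
      _ = f (conjRep σ e g (e v)) := by rw [h1]
      _ = ρ i g (f (e v)) := hf g (e v)
      _ = ρ i g ((e.trans f) v) := rfl
  have hdec := exists_decomp V ρ hallN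
  -- the span of matrix coefficients with vectors in `Rc`
  set Gen : Set (G → ℂ) := {f | ∃ (j : ι) (x : V j) (ψ : V j →ₗ[ℂ] ℂ),
    x ∈ Rc j ∧ f = fun g => ψ (ρ j g x)} with hGen
  set S : Submodule ℂ (G → ℂ) := Submodule.span ℂ Gen with hS
  have h1S : (1 : G → ℂ) ∈ S := by
    refine Submodule.subset_span ⟨i₀, v₀, φ₀, hRc0 v₀, ?_⟩
    funext g
    rw [hTriv g v₀, hφ₀v₀]
    rfl
  have hgenmul : ∀ f ∈ Gen, ∀ f' ∈ Gen, f * f' ∈ S := by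
    rintro _ ⟨a, x, ψ, hx, rfl⟩ _ ⟨b, y, ψ', hy, rfl⟩
    obtain ⟨T, fT, k, P, s, hP, hs, hid⟩ := hdec _ (V a ⊗[ℂ] V b) ((ρ a).tprod (ρ b)) rfl
    letI := fT
    set σ := (ρ a).tprod (ρ b) with hσ'
    have hσtm : ∀ (g : G) (x' : V a) (y' : V b),
        σ g (x' ⊗ₜ[ℂ] y') = ρ a g x' ⊗ₜ[ℂ] ρ b g y' := by
      intro g x' y'
      rw [hσ', Representation.tprod_apply, TensorProduct.map_tmul]
    set Φ : (V a ⊗[ℂ] V b) →ₗ[ℂ] ℂ := (LinearMap.mul' ℂ ℂ) ∘ₗ (TensorProduct.map ψ ψ')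
      with hΦ
    have hkey : ((fun g => ψ (ρ a g x)) * (fun g => ψ' (ρ b g y)) : G → ℂ) =
        ∑ t, (fun g => (Φ ∘ₗ s t) (ρ (k t) g (P t (x ⊗ₜ[ℂ] y)))) := by
      funext g
      rw [Finset.sum_apply]
      have h1 : ((fun g => ψ (ρ a g x)) * (fun g => ψ' (ρ b g y)) : G → ℂ) g
          = Φ (σ g (x ⊗ₜ[ℂ] y)) := by
        rw [Pi.mul_apply, hσtm, hΦ]
        simp only [LinearMap.comp_apply, TensorProduct.map_tmul, LinearMap.mul'_apply]
      rw [h1]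
      have h2 : σ g (x ⊗ₜ[ℂ] y) = ∑ t, s t (ρ (k t) g (P t (x ⊗ₜ[ℂ] y))) := by
        have h3 := hid (σ g (x ⊗ₜ[ℂ] y))
        rw [← h3]
        congr 1
        funext t
        rw [hP t g (x ⊗ₜ[ℂ] y)]
      rw [h2, map_sum]
      rfl
    rw [hkey]
    refine Submodule.sum_mem _ (fun t _ => Submodule.subset_span ?_)
    refine ⟨k t, P t (x ⊗ₜ[ℂ] y), Φ ∘ₗ s t, ?_, rfl⟩
    refine hquot a b (k t) (P t) (fun g x' y' => ?_) x hx y hy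
    rw [← hσtm, hP]
  have hSmul : ∀ f ∈ S, ∀ f' ∈ S, f * f' ∈ S := by
    have step1 : ∀ f₀ ∈ Gen, ∀ f ∈ S, f₀ * f ∈ S := by
      intro f₀ hf₀ f hf
      refine Submodule.span_induction (fun g hg => hgenmul f₀ hf₀ g hg) ?_ ?_ ?_ hf
      · rw [mul_zero]; exact S.zero_mem
      · intro u v _ _ hu hv
        rw [mul_add]; exact S.add_mem hu hv
      · intro c u _ hu
        rw [mul_smul_comm]; exact S.smul_mem c hu
    intro f hf f' hf'
    refine Submodule.span_induction (fun g hg => step1 g hg f' hf') ?_ ?_ ?_ hf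
    · rw [zero_mul]; exact S.zero_mem
    · intro u v _ _ hu hv
      rw [add_mul]; exact S.add_mem hu hv
    · intro c u _ hu
      rw [smul_mul_assoc]; exact S.smul_mem c hu
  -- the subgroup
  set H : Subgroup G :=
    { carrier := {g | ∀ x ∈ R, piRep V ρ g x = x}
      one_mem' := by
        intro x _
        rw [map_one]
        rfl
      mul_mem' := by
        intro a b ha hb x hx
        rw [map_mul]
        have : (piRep V ρ a * piRep V ρ b) x = piRep V ρ a (piRep V ρ b x) := rfl
        rw [this, hb x hx, ha x hx]
      inv_mem' := by
        intro a ha x hx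
        have h1 : piRep V ρ a⁻¹ (piRep V ρ a x) = x := by
          have : piRep V ρ a⁻¹ (piRep V ρ a x) = (piRep V ρ a⁻¹ * piRep V ρ a) x := rfl
          rw [this, ← map_mul, inv_mul_cancel, map_one]
          rfl
        rw [ha x hx] at h1
        exact h1 } with hH
  have hHmem : ∀ h : G, h ∈ H ↔ ∀ j, ∀ v ∈ Rc j, ρ j h v = v := by
    intro h
    constructor
    · intro hh j v hv
      have h1 := hh (Pi.single j v) ((hRcmem j v).mp hv)
      rw [hsingle] at h1
      have := congrFun h1 j
      rwa [Pi.single_eq_same, Pi.single_eq_same] at this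
    · intro hc x hx
      funext i
      rw [hτ_apply, hc i (x i) (hcomp x hx i)]
  -- core lemma : `H`-fixed vectors of `V i` lie in `Rc i`
  have hcore : ∀ (i : ι) (v : V i), (∀ h ∈ H, ρ i h v = v) → v ∈ Rc i := by
    intro i v hv
    obtain ⟨y₀, hy₀⟩ := exists_ne (0 : V i)
    have hφex : ∃ φ : V i →ₗ[ℂ] ℂ, φ y₀ = 1 := by
      have h := (Module.forall_dual_apply_eq_zero_iff ℂ y₀).not.mpr hy₀
      push_neg at h
      obtain ⟨φ, hφ⟩ := h
      exact ⟨(φ y₀)⁻¹ • φ, by simp [inv_mul_cancel₀ hφ]⟩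
    obtain ⟨φ, hφy₀⟩ := hφex
    -- the matrix coefficient of an `H`-fixed vector respects the separation classes of `S`
    have hFS : (fun g => φ (ρ i g v)) ∈ S := by
      refine mem_of_respects S h1S hSmul _ (fun a b hab => ?_)
      have hRel : ∀ j, ∀ w ∈ Rc j, ρ j a w = ρ j b w := by
        intro j w hw
        have hψ : ∀ ψ : Module.Dual ℂ (V j), ψ (ρ j a w - ρ j b w) = 0 := by
          intro ψ
          have h1 := hab _ (Submodule.subset_span ⟨j, w, ψ, hw, rfl⟩)
          rw [map_sub, h1, sub_self]
        exact sub_eq_zero.mp ((Module.forall_dual_apply_eq_zero_iff ℂ _).mp hψ)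
      have hbH : b⁻¹ * a ∈ H := by
        rw [hHmem]
        intro j w hw
        rw [← hco, hRel j w hw, hco]
        simp
      have hvfix := hv _ hbH
      show φ (ρ i a v) = φ (ρ i b v)
      calc φ (ρ i a v) = φ (ρ i (b * (b⁻¹ * a)) v) := by rw [show b * (b⁻¹ * a) = a by group]
        _ = φ (ρ i b (ρ i (b⁻¹ * a) v)) := by rw [hco]
        _ = φ (ρ i b v) := by rw [hvfix]
    -- apply the averaging functional
    have hLS : ∀ f ∈ S, Lmap (ρ i) y₀ f ∈ Rc i := by
      intro f hf
      refine Submodule.span_induction ?_ ?_ ?_ ?_ hf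
      · rintro _ ⟨j, x, ψ, hx, rfl⟩
        rw [Lmap_coeff]
        by_cases hji : j = i
        · subst hji
          obtain ⟨c, hc⟩ := schur_endo (hSimple j) (avgMap (ρ j) (ρ j) ψ y₀)
            (fun g w => avgMap_equivariant (ρ j) (ρ j) ψ y₀ g w)
          rw [hc]
          exact (Rc j).smul_mem c hx
        · have h0 := schur_zero (hSimple j) (hSimple i) (hNonIso j i hji)
            (avgMap (ρ j) (ρ i) ψ y₀) (fun g w => avgMap_equivariant (ρ j) (ρ i) ψ y₀ g w)
          rw [h0]
          exact (Rc i).zero_mem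
      · rw [map_zero]; exact (Rc i).zero_mem
      · intro u w _ _ hu hw
        rw [map_add]; exact (Rc i).add_mem hu hw
      · intro c u _ hu
        rw [map_smul]; exact (Rc i).smul_mem c hu
    have hmem := hLS _ hFS
    rw [Lmap_coeff] at hmem
    obtain ⟨c, hc⟩ := schur_endo (hSimple i) (avgMap (ρ i) (ρ i) φ y₀)
      (fun g w => avgMap_equivariant (ρ i) (ρ i) φ y₀ g w)
    have htr := avgMap_trace (ρ i) φ y₀
    rw [hc, map_smul, LinearMap.trace_id, hφy₀, mul_one, smul_eq_mul] at htr
    have hdne : (Module.finrank ℂ (V i) : ℂ) ≠ 0 := by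
      exact_mod_cast Nat.cast_ne_zero.mpr (Nat.pos_iff_ne_zero.mp Module.finrank_pos)
    have hcne : c ≠ 0 := by
      intro h0
      rw [h0, zero_mul] at htr
      exact (Nat.cast_ne_zero.mpr (Fintype.card_ne_zero (α := G))) htr.symm
    rw [hc] at hmem
    have hmem2 := (Rc i).smul_mem c⁻¹ hmem
    rw [LinearMap.smul_apply, LinearMap.id_apply, smul_smul, inv_mul_cancel₀ hcne,
      one_smul] at hmem2
    exact hmem2
  -- conclusion
  refine ⟨H, le_antisymm ?_ ?_⟩
  · intro x hx
    simp only [Submodule.mem_iInf, LinearMap.mem_eqLocus, LinearMap.id_apply]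
    exact fun h hh => hh x hx
  · intro x hx
    simp only [Submodule.mem_iInf, LinearMap.mem_eqLocus, LinearMap.id_apply] at hx
    have hxi : ∀ i, x i ∈ Rc i := by
      intro i
      refine hcore i (x i) (fun h hh => ?_)
      have := congrFun (hx h hh) i
      rwa [hτ_apply] at this
    have hxsum : x = ∑ i, Pi.single i (x i) := (Finset.univ_sum_single x).symm
    rw [hxsum]
    exact Submodule.sum_mem _ (fun i _ => (hRcmem i (x i)).mp (hxi i))
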